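/- Let V be a finite-dimensional real inner product space, and let u₁, u₂ : V → ℂ be real-linear maps such that the map (u₁,u₂) : V → ℂ² has a right inverse of operator norm at most η^{-1}, and ‖u₁‖ ≤ 2C, ‖u₂‖ ≤ 2C. Let Π₁ = ker u₁, Π₂ = ker u₂, and define κ = max{|⟨x,y⟩| : x ∈ Π₁, y ∈ Π₂, ‖x‖ = ‖y‖ = 1}. Then κ² ≤ 1 − η²/(4C²). -/

import Mathlib

/-- Angle bound between kernels of two uniformly transverse linear maps:
if `(u₁,u₂) : V → ℂ²` has a right inverse of norm `≤ η⁻¹` and `‖uᵢ‖ ≤ 2C`, then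
for unit vectors `x ∈ ker u₁`, `y ∈ ker u₂` one has `|⟨x,y⟩|² ≤ 1 − η²/(4C²)`. -/
theorem kernel_angle_bound {V : Type*} [NormedAddCommGroup V] [InnerProductSpace ℝ V]
    [FiniteDimensional ℝ V] (hdim : Module.finrank ℝ V = 4)
    (u₁ u₂ : V →L[ℝ] ℂ) (η C : ℝ) (hη : 0 < η) (hC : 0 < C)
    (R : (ℂ × ℂ) →L[ℝ] V)
    (hR : (u₁.prod u₂).comp R = ContinuousLinearMap.id ℝ (ℂ × ℂ))
    (hRnorm : ‖R‖ ≤ η⁻¹) (hu₁ : ‖u₁‖ ≤ 2 * C) (hu₂ : ‖u₂‖ ≤ 2 * C) :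
    ∀ x y : V, x ∈ LinearMap.ker (u₁ : V →ₗ[ℝ] ℂ) → y ∈ LinearMap.ker (u₂ : V →ₗ[ℝ] ℂ) → ‖x‖ = 1 → ‖y‖ = 1 →
      |(inner ℝ x y : ℝ)| ^ 2 ≤ 1 - η ^ 2 / (4 * C ^ 2) := by
  intro x y hx hy hxn hyn
  have hx0 : u₁ x = 0 := hx
  have hy0 : u₂ y = 0 := hy
  have hRap : ∀ w : ℂ × ℂ, (u₁.prod u₂) (R w) = w := by
    intro w
    have := ContinuousLinearMap.ext_iff.mp hR w
    simpa using this
  have hsurj : Function.Surjective (u₁.prod u₂) := fun w => ⟨R w, hRap w⟩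
  have hfr : Module.finrank ℝ V = Module.finrank ℝ (ℂ × ℂ) := by
    simp [Module.finrank_prod, Complex.finrank_real_complex, hdim]
  have hinj : Function.Injective (u₁.prod u₂) :=
    (LinearMap.injective_iff_surjective_of_finrank_eq_finrank
      (f := ((u₁.prod u₂) : V →ₗ[ℝ] ℂ × ℂ)) hfr).mpr hsurj
  -- y = R (u₁ y, 0)
  have hyR : y = R (u₁ y, 0) := by
    apply hinj
    rw [hRap (u₁ y, 0)]
    simp [ContinuousLinearMap.prod_apply, hy0]
  -- lower bound: η ≤ ‖u₁ y‖
  have hlow : η ≤ ‖u₁ y‖ := by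
    have h2 : ‖((u₁ y, 0) : ℂ × ℂ)‖ = ‖u₁ y‖ := by
      simp [Prod.norm_def]
    have h1 : (1:ℝ) ≤ ‖R‖ * ‖u₁ y‖ := by
      calc (1:ℝ) = ‖y‖ := hyn.symm
      _ = ‖R (u₁ y, 0)‖ := by rw [← hyR]
      _ ≤ ‖R‖ * ‖((u₁ y, 0) : ℂ × ℂ)‖ := R.le_opNorm _
      _ = ‖R‖ * ‖u₁ y‖ := by rw [h2]
    have h3 : (1:ℝ) ≤ η⁻¹ * ‖u₁ y‖ :=
      h1.trans (mul_le_mul_of_nonneg_right hRnorm (norm_nonneg _))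
    calc η = η * 1 := (mul_one η).symm
    _ ≤ η * (η⁻¹ * ‖u₁ y‖) := mul_le_mul_of_nonneg_left h3 hη.le
    _ = ‖u₁ y‖ := by field_simp
  set t : ℝ := inner ℝ x y with ht
  set z : V := y - t • x with hz
  have hinner : (inner ℝ y (t • x) : ℝ) = t * t := by
    rw [real_inner_smul_right, real_inner_comm]
  have hznorm : ‖z‖ ^ 2 = 1 - t ^ 2 := by
    have h := @norm_sub_sq_real V _ _ y (t • x)
    rw [hinner] at h
    rw [hz, h, norm_smul, hxn, hyn]
    simp [abs_mul_abs_self]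
    ring
  have hu1z : u₁ z = u₁ y := by
    simp [hz, hx0]
  have hkey : η ≤ 2 * C * ‖z‖ := by
    calc η ≤ ‖u₁ y‖ := hlow
    _ = ‖u₁ z‖ := by rw [hu1z]
    _ ≤ ‖u₁‖ * ‖z‖ := u₁.le_opNorm z
    _ ≤ 2 * C * ‖z‖ := by nlinarith [norm_nonneg z]
  have hzsq : η ^ 2 ≤ 4 * C ^ 2 * (1 - t ^ 2) := by
    nlinarith [norm_nonneg z]
  have h4C : (0:ℝ) < 4 * C ^ 2 := by positivity
  rw [sq_abs]
  have hdiv : η ^ 2 / (4 * C ^ 2) ≤ 1 - t ^ 2 := by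
    rw [div_le_iff₀ h4C]; nlinarith
  linarith
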